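/- Let H1 and H2 be complex Hilbert spaces and let S and T be densely defined closed linear operators from H1 to H2 with equal domains D(S) = D(T). If the operator T − S (defined on D(T)) is bounded, i.e. there is a constant C ≥ 0 with ‖Tx − Sx‖ ≤ C‖x‖ for all x ∈ D(T), then the gap satisfies θ(S,T) ≤ C; in particular θ(S,T) ≤ ‖T − S‖, the operator norm of the bounded operator T − S on D(T). -/

import Mathlib

open scoped InnerProductSpace

/-- Orthogonal projection (as an operator on `E`) onto the closure of a submodule. -/
noncomputable def projCL {E : Type*} [NormedAddCommGroup E] [InnerProductSpace ℂ E]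
    [CompleteSpace E] (M : Submodule ℂ E) : E →L[ℂ] E :=
  haveI : CompleteSpace M.topologicalClosure :=
    M.isClosed_topologicalClosure.completeSpace_coe
  M.topologicalClosure.subtypeL.comp (Submodule.orthogonalProjectionOnto M.topologicalClosure)

/-- The graph of a partially defined operator, viewed inside the Hilbert space `E ×₂ F`. -/
noncomputable def graphL2 {E F : Type*} [NormedAddCommGroup E] [InnerProductSpace ℂ E]
    [NormedAddCommGroup F] [InnerProductSpace ℂ F] (T : E →ₗ.[ℂ] F) :
    Submodule ℂ (WithLp 2 (E × F)) :=
  T.graph.map ((WithLp.linearEquiv 2 ℂ (E × F)).symm : (E × F) →ₗ[ℂ] WithLp 2 (E × F))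

/-- The gap `θ(S,T) = ‖P_{G(S)} - P_{G(T)}‖` between two (partially defined) operators. -/
noncomputable def gap {E F : Type*} [NormedAddCommGroup E] [InnerProductSpace ℂ E]
    [NormedAddCommGroup F] [InnerProductSpace ℂ F] [CompleteSpace E] [CompleteSpace F]
    (S T : E →ₗ.[ℂ] F) : ℝ :=
  ‖projCL (graphL2 S) - projCL (graphL2 T)‖

/-- The minimum modulus `m(T) = inf {‖Tx‖ : x ∈ D(T), ‖x‖ = 1}` of a partially
defined operator. -/
noncomputable def minModulus {E F : Type*} [NormedAddCommGroup E] [InnerProductSpace ℂ E]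
    [NormedAddCommGroup F] [InnerProductSpace ℂ F] (T : E →ₗ.[ℂ] F) : ℝ :=
  sInf ((fun x : T.domain => ‖T x‖) '' {x : T.domain | ‖(x : E)‖ = 1})

/-- A partially defined operator is minimum attaining if its minimum modulus is attained
at a unit vector of its domain. -/
def MinAttaining {E F : Type*} [NormedAddCommGroup E] [InnerProductSpace ℂ E]
    [NormedAddCommGroup F] [InnerProductSpace ℂ F] (T : E →ₗ.[ℂ] F) : Prop :=
  ∃ x₀ : T.domain, ‖(x₀ : E)‖ = 1 ∧ ‖T x₀‖ = minModulus T

/-- The sum `T + S` of a partially defined operator `T` and a bounded operator `S`,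
with domain `D(T)`. -/
def addBdd {E F : Type*} [NormedAddCommGroup E] [InnerProductSpace ℂ E]
    [NormedAddCommGroup F] [InnerProductSpace ℂ F] (T : E →ₗ.[ℂ] F) (S : E →L[ℂ] F) :
    E →ₗ.[ℂ] F :=
  ⟨T.domain, T.toFun + (S : E →ₗ[ℂ] F).comp T.domain.subtype⟩

/-- The minimum modulus `m(T) = inf {‖Tx‖ : ‖x‖ = 1}` of a bounded operator. -/
noncomputable def minModulusB {E F : Type*} [NormedAddCommGroup E] [InnerProductSpace ℂ E]
    [NormedAddCommGroup F] [InnerProductSpace ℂ F] (T : E →L[ℂ] F) : ℝ :=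
  sInf ((fun x : E => ‖T x‖) '' {x : E | ‖x‖ = 1})

/-- A bounded operator is minimum attaining if its minimum modulus is attained at a
unit vector. -/
def MinAttainingB {E F : Type*} [NormedAddCommGroup E] [InnerProductSpace ℂ E]
    [NormedAddCommGroup F] [InnerProductSpace ℂ F] (T : E →L[ℂ] F) : Prop :=
  ∃ x₀ : E, ‖x₀‖ = 1 ∧ ‖T x₀‖ = minModulusB T

section AuxProj

variable {E : Type*} [NormedAddCommGroup E] [InnerProductSpace ℂ E] [CompleteSpace E]

lemma projCL_mem (M : Submodule ℂ E) (u : E) : projCL M u ∈ M.topologicalClosure := by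
  haveI : CompleteSpace M.topologicalClosure :=
    M.isClosed_topologicalClosure.completeSpace_coe
  exact (Submodule.orthogonalProjectionOnto M.topologicalClosure u).2

lemma sub_projCL_mem (M : Submodule ℂ E) (u : E) :
    u - projCL M u ∈ (M.topologicalClosure)ᗮ := by
  haveI : CompleteSpace M.topologicalClosure :=
    M.isClosed_topologicalClosure.completeSpace_coe
  exact Submodule.sub_starProjection_mem_orthogonal u

lemma projCL_dist_le (M : Submodule ℂ E) (u v : E) (hv : v ∈ M) :
    ‖u - projCL M u‖ ≤ ‖u - v‖ := by
  haveI : CompleteSpace M.topologicalClosure :=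
    M.isClosed_topologicalClosure.completeSpace_coe
  have hv' : v ∈ M.topologicalClosure := M.le_topologicalClosure hv
  have : ‖u - projCL M u‖ = ⨅ x : M.topologicalClosure, ‖u - x‖ :=
    Submodule.starProjection_minimal u
  rw [this]
  exact ciInf_le ⟨0, fun r ⟨x, hx⟩ => hx ▸ norm_nonneg _⟩ (⟨v, hv'⟩ : M.topologicalClosure)

lemma closure_bound (M : Submodule ℂ E) (Q : E →L[ℂ] E) (C : ℝ)
    (h : ∀ u ∈ M, ‖u - Q u‖ ≤ C * ‖u‖) :
    ∀ u ∈ M.topologicalClosure, ‖u - Q u‖ ≤ C * ‖u‖ := by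
  intro u hu
  have hsub : closure (M : Set E) ⊆ {u : E | ‖u - Q u‖ ≤ C * ‖u‖} :=
    closure_minimal h
      (isClosed_le ((continuous_id.sub Q.continuous).norm)
        (continuous_const.mul continuous_norm))
  rw [← Submodule.topologicalClosure_coe] at hsub
  exact hsub hu

lemma projCL_sub_norm_le (M N : Submodule ℂ E) (C : ℝ) (hC : 0 ≤ C)
    (hMN : ∀ u ∈ M, ‖u - projCL N u‖ ≤ C * ‖u‖)
    (hNM : ∀ v ∈ N, ‖v - projCL M v‖ ≤ C * ‖v‖) :
    ‖projCL M - projCL N‖ ≤ C := by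
  have hMN' := closure_bound M (projCL N) C hMN
  have hNM' := closure_bound N (projCL M) C hNM
  refine ContinuousLinearMap.opNorm_le_bound _ hC fun z => ?_
  set a := projCL M z with ha
  set b := z - a with hb
  have haM : a ∈ M.topologicalClosure := projCL_mem M z
  have hbM : b ∈ (M.topologicalClosure)ᗮ := sub_projCL_mem M z
  -- bound on ‖projCL N b‖
  have h2 : ‖projCL N b‖ ≤ C * ‖b‖ := by
    set w := projCL N b with hw
    have hwN : w ∈ N.topologicalClosure := projCL_mem N b
    have h1 : ⟪w, b - w⟫_ℂ = 0 :=
      (Submodule.mem_orthogonal _ _).1 (sub_projCL_mem N b) w hwN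
    have hwb : ⟪w, b⟫_ℂ = (‖w‖ : ℂ) ^ 2 := by
      have := h1
      rw [inner_sub_right, sub_eq_zero] at this
      rw [this, inner_self_eq_norm_sq_to_K]
      norm_cast
    have hPMwb : ⟪(projCL M w : E), b⟫_ℂ = 0 :=
      (Submodule.mem_orthogonal _ _).1 hbM _ (projCL_mem M w)
    have e1 : ⟪w - projCL M w, b⟫_ℂ = (‖w‖ : ℂ) ^ 2 := by
      rw [inner_sub_left, hPMwb, sub_zero, hwb]
    have key : ‖w‖ ^ 2 ≤ (C * ‖w‖) * ‖b‖ := by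
      calc ‖w‖ ^ 2 = ‖⟪w - projCL M w, b⟫_ℂ‖ := by
            rw [e1]
            simp [abs_of_nonneg (norm_nonneg w)]
        _ ≤ ‖w - projCL M w‖ * ‖b‖ := norm_inner_le_norm _ _
        _ ≤ (C * ‖w‖) * ‖b‖ :=
            mul_le_mul_of_nonneg_right (hNM' w hwN) (norm_nonneg b)
    by_cases hw0 : ‖w‖ = 0
    · rw [hw0]; positivity
    · have hwpos : 0 < ‖w‖ := lt_of_le_of_ne (norm_nonneg _) (Ne.symm hw0)
      nlinarith [norm_nonneg b]
  have hzab : z = a + b := by rw [hb]; abel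
  have hab : ⟪a, b⟫_ℂ = 0 := (Submodule.mem_orthogonal _ _).1 hbM a haM
  have hz2 : ‖z‖ ^ 2 = ‖a‖ ^ 2 + ‖b‖ ^ 2 := by
    rw [hzab, pow_two, pow_two, pow_two]
    exact norm_add_sq_eq_norm_sq_add_norm_sq_of_inner_eq_zero a b hab
  set x1 := a - projCL N a with hx1
  set y1 := projCL N b with hy1
  have hrepr : (projCL M - projCL N) z = x1 - y1 := by
    have : projCL N z = projCL N a + projCL N b := by
      conv_lhs => rw [hzab]
      rw [map_add]
    simp only [ContinuousLinearMap.sub_apply, this, hx1, hy1, ← ha]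
    abel
  have hx1N : x1 ∈ (N.topologicalClosure)ᗮ := sub_projCL_mem N a
  have hy1N : y1 ∈ N.topologicalClosure := projCL_mem N b
  have hinner : ⟪x1, -y1⟫_ℂ = 0 := by
    rw [inner_neg_right, neg_eq_zero]
    rw [inner_eq_zero_symm]
    exact (Submodule.mem_orthogonal _ _).1 hx1N y1 hy1N
  have hsq : ‖x1 - y1‖ ^ 2 = ‖x1‖ ^ 2 + ‖y1‖ ^ 2 := by
    have h := norm_add_sq_eq_norm_sq_add_norm_sq_of_inner_eq_zero x1 (-y1) hinner
    rw [← sub_eq_add_neg, norm_neg] at h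
    rw [pow_two, pow_two, pow_two]
    exact h
  have hx1le : ‖x1‖ ≤ C * ‖a‖ := hMN' a haM
  have hfin2 : ‖(projCL M - projCL N) z‖ ^ 2 ≤ (C * ‖z‖) ^ 2 := by
    rw [hrepr, hsq]
    have h1' : ‖x1‖ ^ 2 ≤ (C * ‖a‖) ^ 2 := by
      have := norm_nonneg x1; nlinarith [norm_nonneg a, norm_nonneg x1]
    have h2' : ‖y1‖ ^ 2 ≤ (C * ‖b‖) ^ 2 := by
      nlinarith [norm_nonneg b, norm_nonneg y1]
    have hz2' : (C * ‖z‖) ^ 2 = (C * ‖a‖) ^ 2 + (C * ‖b‖) ^ 2 := by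
      rw [mul_pow, mul_pow, mul_pow, hz2]; ring
    linarith
  calc ‖(projCL M - projCL N) z‖ = Real.sqrt (‖(projCL M - projCL N) z‖ ^ 2) :=
        (Real.sqrt_sq (norm_nonneg _)).symm
    _ ≤ Real.sqrt ((C * ‖z‖) ^ 2) := Real.sqrt_le_sqrt hfin2
    _ = C * ‖z‖ := Real.sqrt_sq (by positivity)

end AuxProj


section AuxGraph

variable {H₁ H₂ : Type*}
  [NormedAddCommGroup H₁] [InnerProductSpace ℂ H₁] [CompleteSpace H₁]
  [NormedAddCommGroup H₂] [InnerProductSpace ℂ H₂] [CompleteSpace H₂]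

lemma graph_bound (S T : H₁ →ₗ.[ℂ] H₂) (hdom : S.domain ≤ T.domain) (C : ℝ) (hC : 0 ≤ C)
    (h : ∀ (x : H₁) (hxS : x ∈ S.domain) (hxT : x ∈ T.domain),
      ‖S ⟨x, hxS⟩ - T ⟨x, hxT⟩‖ ≤ C * ‖x‖) :
    ∀ u ∈ graphL2 S, ‖u - projCL (graphL2 T) u‖ ≤ C * ‖u‖ := by
  intro u hu
  obtain ⟨p, hp, hpu⟩ := Submodule.mem_map.1 hu
  obtain ⟨y, hy⟩ := (S.mem_graph_iff').1 hp
  set x : H₁ := (y : H₁) with hxdef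
  have hxS : x ∈ S.domain := y.2
  have hxT : x ∈ T.domain := hdom hxS
  set e := ((WithLp.linearEquiv 2 ℂ (H₁ × H₂)).symm :
    (H₁ × H₂) →ₗ[ℂ] WithLp 2 (H₁ × H₂)) with he
  set v := e (x, T ⟨x, hxT⟩) with hv
  have hvmem : v ∈ graphL2 T := Submodule.mem_map_of_mem (T.mem_graph ⟨x, hxT⟩)
  have hu' : u = e (x, S y) := by rw [← hpu, ← hy]
  have huv : u - v = e (0, S y - T ⟨x, hxT⟩) := by
    rw [hu', hv, ← map_sub]
    congr 1
    rw [Prod.mk_sub_mk, sub_self]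
  have hfst : ∀ q : H₁ × H₂, (e q).fst = q.1 := fun q => rfl
  have hsnd : ∀ q : H₁ × H₂, (e q).snd = q.2 := fun q => rfl
  have hnorm_uv : ‖u - v‖ = ‖S y - T ⟨x, hxT⟩‖ := by
    rw [huv, WithLp.prod_norm_eq_of_L2, hfst, hsnd]
    simp [Real.sqrt_sq (norm_nonneg _)]
  have hx_le : ‖x‖ ≤ ‖u‖ := by
    rw [hu', WithLp.prod_norm_eq_of_L2, hfst, hsnd]
    calc ‖x‖ = Real.sqrt (‖x‖ ^ 2) := (Real.sqrt_sq (norm_nonneg _)).symm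
      _ ≤ Real.sqrt (‖(x, S y).1‖ ^ 2 + ‖(x, S y).2‖ ^ 2) :=
          Real.sqrt_le_sqrt (le_add_of_nonneg_right (sq_nonneg _))
  have hyx : y = ⟨x, hxS⟩ := rfl
  calc ‖u - projCL (graphL2 T) u‖ ≤ ‖u - v‖ := projCL_dist_le _ u v hvmem
    _ = ‖S y - T ⟨x, hxT⟩‖ := hnorm_uv
    _ ≤ C * ‖x‖ := by rw [hyx]; exact h x hxS hxT
    _ ≤ C * ‖u‖ := mul_le_mul_of_nonneg_left hx_le hC

end AuxGraph


/-- If `S` and `T` are densely defined closed operators between complex Hilbert spaces with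
equal domains and the difference `T - S` is bounded by the constant `C` on the common domain,
then the gap satisfies `θ(S,T) ≤ C`. -/
theorem gap_le_of_sub_bounded {H₁ H₂ : Type*}
    [NormedAddCommGroup H₁] [InnerProductSpace ℂ H₁] [CompleteSpace H₁]
    [NormedAddCommGroup H₂] [InnerProductSpace ℂ H₂] [CompleteSpace H₂]
    (S T : H₁ →ₗ.[ℂ] H₂)
    (hSdense : Dense (S.domain : Set H₁)) (hTdense : Dense (T.domain : Set H₁))
    (hSclosed : S.IsClosed) (hTclosed : T.IsClosed)
    (hdom : S.domain = T.domain) (C : ℝ) (hC : 0 ≤ C)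
    (hbdd : ∀ (x : H₁) (hxT : x ∈ T.domain) (hxS : x ∈ S.domain),
      ‖T ⟨x, hxT⟩ - S ⟨x, hxS⟩‖ ≤ C * ‖x‖) :
    gap S T ≤ C := by
  show ‖projCL (graphL2 S) - projCL (graphL2 T)‖ ≤ C
  refine projCL_sub_norm_le _ _ C hC ?_ ?_
  · exact graph_bound S T (le_of_eq hdom) C hC (fun x hxS hxT => by
      rw [norm_sub_rev]; exact hbdd x hxT hxS)
  · exact graph_bound T S (le_of_eq hdom.symm) C hC (fun x hxT hxS => hbdd x hxT hxS)
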